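/- Let G be a divisor on C of even degree with ½·deg G ≥ 2g. There exists a unique bijective correspondence between the set of k-equivalence classes of G-forms and the set of divisor classes (divisors modulo linear equivalence) of degree ½·deg G, with respect to which, for any G-form X and any divisor D of degree ½·deg G, the k-equivalence class of X corresponds to the divisor class of D if and only if X represents D. In particular, every G-form represents some divisor of degree ½·deg G, and two G-forms representing divisors D and D' are k-equivalent if and only if D and D' are linearly equivalent. -/

import Mathlib

/-- All 2×2 minors of a matrix vanish, i.e. the matrix has rank at most 1. -/
def MinorsVanish {R : Type} [CommRing R] {m n : Type} (M : Matrix m n R) : Prop :=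
  ∀ i i' j j', M i j * M i' j' = M i j' * M i' j

/-- A matrix is `k`-general if some row and some column each consist of
`k`-linearly independent entries. -/
def KGeneral (k : Type) [Field k] {V : Type} [AddCommMonoid V] [Module k V]
    {m n : Type} (M : Matrix m n V) : Prop :=
  (∃ i, LinearIndependent k fun j => M i j) ∧ ∃ j, LinearIndependent k fun i => M i j

/-- Two matrices over a `k`-algebra are `k`-equivalent if `Y = Φ X Ψ` for some
invertible square matrices `Φ`, `Ψ` with entries in `k`. -/
def KEquivalent (k : Type) [Field k] {A : Type} [CommRing A] [Algebra k A]
    {m n : Type} [Fintype m] [Fintype n] [DecidableEq m] [DecidableEq n]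
    (X Y : Matrix m n A) : Prop :=
  ∃ (Φ : Matrix m m k) (Ψ : Matrix n n k), IsUnit Φ.det ∧ IsUnit Ψ.det ∧
    Y = Φ.map (algebraMap k A) * X * Ψ.map (algebraMap k A)

/-- An abstraction of a nonsingular projective curve `C` of genus `g` over an
algebraically closed field `k`, packaged together with its function field `F = k(C)`,
the divisor `div f` of a nonzero rational function (divisors are finitely supported
`ℤ`-valued functions on the points of `C`), the Riemann–Roch spaces
`L(D) = {f : f = 0 ∨ div f + D ≥ 0}`, the rings `R_E` of functions regular near the
support of a divisor and the ideals `I_E` of functions vanishing to order at least `E`,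
subject to the standard facts about them (including the Riemann–Roch theorem). -/
structure AbstractCurve (k : Type) [Field k] : Type 1 where
  /-- the points of the curve -/
  Point : Type
  /-- the function field `k(C)` -/
  F : Type
  [fieldF : Field F]
  [algF : Algebra k F]
  /-- the genus of the curve -/
  genus : ℕ
  /-- `divOf f` is the divisor of zeros and poles of `f` (junk value `0` at `f = 0`);
  its value at a point `p` is the order of vanishing of `f` at `p`. -/
  divOf : F → (Point →₀ ℤ)
  divOf_mul : ∀ f g : F, f ≠ 0 → g ≠ 0 → divOf (f * g) = divOf f + divOf g
  divOf_algebraMap : ∀ c : k, c ≠ 0 → divOf (algebraMap k F c) = 0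
  divOf_eq_zero_iff : ∀ f : F, f ≠ 0 →
    (divOf f = 0 ↔ ∃ c : k, c ≠ 0 ∧ f = algebraMap k F c)
  /-- a principal divisor has degree zero -/
  deg_divOf : ∀ f : F, f ≠ 0 → (divOf f).sum (fun _ n => n) = 0
  /-- the Riemann–Roch space `L(D)` as a `k`-subspace of the function field -/
  RR : (Point →₀ ℤ) → Submodule k F
  mem_RR : ∀ (D : Point →₀ ℤ) (f : F), f ∈ RR D ↔ f = 0 ∨ 0 ≤ divOf f + D
  finite_RR : ∀ D : Point →₀ ℤ, Module.Finite k (RR D)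
  /-- the Riemann–Roch theorem: `ℓ(D) = deg D - g + 1` whenever `deg D > 2g - 2` -/
  rank_RR : ∀ D : Point →₀ ℤ, 2 * (genus : ℤ) - 2 < D.sum (fun _ n => n) →
    (Module.finrank k (RR D) : ℤ) = D.sum (fun _ n => n) - genus + 1
  /-- the `k`-space `R_E` of functions regular in a neighborhood of the support of `E` -/
  Reg : (Point →₀ ℤ) → Submodule k F
  mem_Reg : ∀ (E : Point →₀ ℤ) (f : F),
    f ∈ Reg E ↔ f = 0 ∨ ∀ p ∈ E.support, 0 ≤ divOf f p
  /-- the `k`-space `I_E ⊆ R_E` of functions vanishing to order at least `E` -/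
  VanishIdeal : (Point →₀ ℤ) → Submodule k F
  mem_VanishIdeal : ∀ (E : Point →₀ ℤ) (f : F),
    f ∈ VanishIdeal E ↔ f = 0 ∨ ∀ p ∈ E.support, E p ≤ divOf f p

namespace AbstractCurve

attribute [instance] fieldF algF

variable {k : Type} [Field k]

/-- The degree of a divisor. -/
def deg (C : AbstractCurve k) (D : C.Point →₀ ℤ) : ℤ := D.sum fun _ n => n

/-- Linear equivalence of divisors: `D ~ D'` iff `D' = D + div f` for some `f ≠ 0`. -/
def LinEquiv (C : AbstractCurve k) (D D' : C.Point →₀ ℤ) : Prop :=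
  ∃ f : C.F, f ≠ 0 ∧ D' = D + C.divOf f

/-- A `G`-form: a square matrix with entries in `L(G)`, all of whose 2×2 minors vanish,
and which is `k`-general.  (In context its size is `n = ½ deg G - g + 1`.) -/
def IsGForm (C : AbstractCurve k) (G : C.Point →₀ ℤ) {n : ℕ}
    (X : Matrix (Fin n) (Fin n) C.F) : Prop :=
  (∀ i j, X i j ∈ C.RR G) ∧ MinorsVanish X ∧ KGeneral k X

/-- The `G`-form `X` represents the divisor `D` (of degree `½ deg G`): `X = u v` where
the entries of the column vector `u` form a `k`-basis of `L(D)` and the entries of the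
row vector `v` form a `k`-basis of `L(G - D)`. -/
def Represents (C : AbstractCurve k) (G D : C.Point →₀ ℤ) {n : ℕ}
    (X : Matrix (Fin n) (Fin n) C.F) : Prop :=
  ∃ u v : Fin n → C.F,
    LinearIndependent k u ∧ Submodule.span k (Set.range u) = C.RR D ∧
    LinearIndependent k v ∧ Submodule.span k (Set.range v) = C.RR (G - D) ∧
    ∀ i j, X i j = u i * v j

/-- An `E`-compression functional `ρ : L(G) → k` (realized as a `k`-linear functional
on the function field): `ρ` kills `L(G - E)`, and for every divisor `D` of degree
`½ deg G` the induced pairing `(a, b) ↦ ρ(ab)` on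
`L(D)/L(D-E) × L(G-D)/L(G-D-E)` is a perfect pairing of `(deg E)`-dimensional
`k`-vector spaces (expressed by nondegeneracy on both sides together with both
quotients having dimension `deg E`). -/
def IsCompression (C : AbstractCurve k) (G E : C.Point →₀ ℤ) (ρ : C.F →ₗ[k] k) : Prop :=
  (∀ f ∈ C.RR (G - E), ρ f = 0) ∧
  ∀ D : C.Point →₀ ℤ, 2 * C.deg D = C.deg G →
    (∀ a ∈ C.RR D, (∀ b ∈ C.RR (G - D), ρ (a * b) = 0) → a ∈ C.RR (D - E)) ∧
    (∀ b ∈ C.RR (G - D), (∀ a ∈ C.RR D, ρ (a * b) = 0) → b ∈ C.RR (G - D - E)) ∧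
    (Module.finrank k
      (C.RR D ⧸ Submodule.comap (C.RR D).subtype (C.RR (D - E))) : ℤ) = C.deg E ∧
    (Module.finrank k
      (C.RR (G - D) ⧸
        Submodule.comap (C.RR (G - D)).subtype (C.RR (G - D - E))) : ℤ) = C.deg E

end AbstractCurve
namespace AbstractCurve

variable {k : Type} [Field k]

/-- `k`-equivalence, as a relation on the `G`-forms of size `n`. -/
def GFormEquiv (C : AbstractCurve k) (G : C.Point →₀ ℤ) (n : ℕ)
    (X Y : {X : Matrix (Fin n) (Fin n) C.F // C.IsGForm G X}) : Prop :=
  KEquivalent k X.1 Y.1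

/-- Linear equivalence, as a relation on the divisors of degree `s`. -/
def DivClassEquiv (C : AbstractCurve k) (s : ℤ)
    (D D' : {D : C.Point →₀ ℤ // C.deg D = s}) : Prop :=
  C.LinEquiv D.1 D'.1

end AbstractCurve

namespace AbstractCurve

open Submodule Module

variable {k : Type} [Field k] {C : AbstractCurve k}

lemma deg_zero : C.deg 0 = 0 := Finsupp.sum_zero_index

lemma deg_add (A B : C.Point →₀ ℤ) : C.deg (A + B) = C.deg A + C.deg B :=
  Finsupp.sum_add_index' (fun _ => rfl) (fun _ _ _ => rfl)

lemma deg_sub (A B : C.Point →₀ ℤ) : C.deg (A - B) = C.deg A - C.deg B :=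
  Finsupp.sum_sub_index (fun _ _ _ => rfl)

lemma deg_single (p : C.Point) (m : ℤ) : C.deg (Finsupp.single p m) = m :=
  Finsupp.sum_single_index rfl

lemma deg_nonneg {A : C.Point →₀ ℤ} (hA : 0 ≤ A) : 0 ≤ C.deg A :=
  Finset.sum_nonneg fun p _ => (Finsupp.le_def.mp hA) p

lemma deg_divOf' (f : C.F) (hf : f ≠ 0) : C.deg (C.divOf f) = 0 := C.deg_divOf f hf

lemma divOf_one : C.divOf 1 = 0 := by
  have := C.divOf_algebraMap 1 one_ne_zero
  rwa [map_one] at this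

lemma divOf_inv (f : C.F) (hf : f ≠ 0) : C.divOf f⁻¹ = -C.divOf f := by
  have h := C.divOf_mul f f⁻¹ hf (inv_ne_zero hf)
  rw [mul_inv_cancel₀ hf, divOf_one] at h
  exact (neg_eq_of_add_eq_zero_right h.symm).symm

lemma RR_mono {A B : C.Point →₀ ℤ} (h : A ≤ B) : C.RR A ≤ C.RR B := by
  intro f hf
  rw [C.mem_RR] at hf ⊢
  rcases hf with h0 | h1
  · exact Or.inl h0
  · exact Or.inr (h1.trans (add_le_add_right h _))

lemma finrank_le_of_RR_le {A B : C.Point →₀ ℤ} (h : C.RR A ≤ C.RR B) :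
    finrank k (C.RR A) ≤ finrank k (C.RR B) := by
  haveI := C.finite_RR B
  exact LinearMap.finrank_le_finrank_of_injective (Submodule.inclusion_injective h)

lemma finrank_RR_mono {A B : C.Point →₀ ℤ} (h : A ≤ B) :
    finrank k (C.RR A) ≤ finrank k (C.RR B) :=
  finrank_le_of_RR_le (RR_mono h)

lemma RR_bot {D : C.Point →₀ ℤ} (h : C.deg D < 0) : C.RR D = ⊥ := by
  rw [eq_bot_iff]
  intro f hf
  rw [C.mem_RR] at hf
  rcases hf with h0 | h1
  · simp [h0]
  · by_cases hf0 : f = 0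
    · simp [hf0]
    · exfalso
      have h2 : 0 ≤ C.deg (C.divOf f + D) := deg_nonneg h1
      rw [deg_add, deg_divOf' f hf0] at h2
      omega

lemma mul_mem_RR {A B : C.Point →₀ ℤ} {f g : C.F} (hf : f ∈ C.RR A) (hg : g ∈ C.RR B) :
    f * g ∈ C.RR (A + B) := by
  rw [C.mem_RR] at hf hg ⊢
  by_cases hf0 : f = 0
  · exact Or.inl (by simp [hf0])
  by_cases hg0 : g = 0
  · exact Or.inl (by simp [hg0])
  rcases hf with h | hf; · exact absurd h hf0
  rcases hg with h | hg; · exact absurd h hg0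
  right
  rw [C.divOf_mul f g hf0 hg0]
  have : C.divOf f + C.divOf g + (A + B) = (C.divOf f + A) + (C.divOf g + B) := by abel
  rw [this]
  exact add_nonneg hf hg

lemma finrank_RR_eq {D : C.Point →₀ ℤ} (h : 2 * (C.genus : ℤ) - 2 < C.deg D) :
    (finrank k (C.RR D) : ℤ) = C.deg D - C.genus + 1 :=
  C.rank_RR D h

lemma map_mulRight_RR (f : C.F) (hf : f ≠ 0) (D : C.Point →₀ ℤ) :
    Submodule.map (LinearMap.mulRight k f) (C.RR D) = C.RR (D - C.divOf f) := by
  ext y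
  simp only [Submodule.mem_map, LinearMap.mulRight_apply]
  constructor
  · rintro ⟨x, hx, rfl⟩
    by_cases hx0 : x = 0
    · rw [C.mem_RR]; exact Or.inl (by simp [hx0])
    rw [C.mem_RR] at hx ⊢
    rcases hx with h | hx; · exact absurd h hx0
    right
    rw [C.divOf_mul x f hx0 hf]
    have : C.divOf x + C.divOf f + (D - C.divOf f) = C.divOf x + D := by abel
    rw [this]
    exact hx
  · intro hy
    by_cases hy0 : y = 0
    · exact ⟨0, Submodule.zero_mem _, by simp [hy0]⟩
    refine ⟨y * f⁻¹, ?_, by field_simp⟩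
    rw [C.mem_RR] at hy ⊢
    rcases hy with h | hy; · exact absurd h hy0
    right
    rw [C.divOf_mul y f⁻¹ hy0 (inv_ne_zero hf), divOf_inv f hf]
    have : C.divOf y + -C.divOf f + D = C.divOf y + (D - C.divOf f) := by abel
    rw [this]
    exact hy

end AbstractCurve
namespace AbstractCurve

open Submodule Module

variable {k : Type} [Field k] {C : AbstractCurve k}

lemma deg_lt_of_genus_lt_finrank (E : C.Point →₀ ℤ)
    (h : (C.genus : ℤ) + 1 ≤ (finrank k (C.RR E) : ℤ)) :
    2 * (C.genus : ℤ) - 2 < C.deg E := by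
  by_contra hle
  push_neg at hle
  haveI := C.finite_RR E
  cases isEmpty_or_nonempty C.Point with
  | inl hempty =>
    have hall : ∀ A : C.Point →₀ ℤ, A = 0 := fun A => Finsupp.ext fun p => (hempty.false p).elim
    have hE0 : C.deg E = 0 := by rw [hall E, deg_zero]
    have hle1 : C.RR E ≤ LinearMap.range (Algebra.linearMap k C.F) := by
      intro f hf
      by_cases hf0 : f = 0
      · simp [hf0]
      · obtain ⟨c, -, rfl⟩ := (C.divOf_eq_zero_iff f hf0).mp (hall _)
        exact ⟨c, rfl⟩
    haveI : Module.Finite k (LinearMap.range (Algebra.linearMap k C.F)) :=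
      Module.Finite.range _
    have h2 : finrank k (C.RR E) ≤ finrank k (LinearMap.range (Algebra.linearMap k C.F)) :=
      LinearMap.finrank_le_finrank_of_injective (Submodule.inclusion_injective hle1)
    have h3 : finrank k (LinearMap.range (Algebra.linearMap k C.F)) ≤ 1 := by
      have := LinearMap.finrank_range_le (Algebra.linearMap k C.F)
      simpa using this
    omega
  | inr hp =>
    obtain ⟨p⟩ := hp
    rcases lt_or_ge (C.deg E) 0 with hneg | hpos
    · rw [RR_bot hneg] at h
      rw [finrank_bot] at h
      omega
    · set m : ℤ := 2 * (C.genus : ℤ) - 1 - C.deg E with hm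
      have hm1 : 1 ≤ m := by omega
      set A : C.Point →₀ ℤ := Finsupp.single p m with hA
      have hA0 : 0 ≤ A := Finsupp.single_nonneg.mpr (by omega)
      have hEA : E ≤ E + A := le_add_of_nonneg_right hA0
      have hdeg : C.deg (E + A) = 2 * (C.genus : ℤ) - 1 := by
        rw [deg_add, hA, deg_single]; omega
      have hr := finrank_RR_eq (C := C) (D := E + A) (by omega)
      have hmono := finrank_RR_mono hEA
      omega

lemma eq_of_RR_le {s : ℤ} (hs : 2 * (C.genus : ℤ) ≤ s) {D1 D2 : C.Point →₀ ℤ}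
    (h1 : C.deg D1 = s) (h2 : C.deg D2 = s) (hRR : C.RR D1 = C.RR D2) : D1 ≤ D2 := by
  by_contra hnot
  obtain ⟨p, hp⟩ : ∃ p, D2 p < D1 p := by
    by_contra hno
    push_neg at hno
    exact hnot (Finsupp.le_def.mpr hno)
  have hsub : C.RR D1 ≤ C.RR (D1 - Finsupp.single p 1) := by
    intro f hf
    have hf2 : f ∈ C.RR D2 := hRR ▸ hf
    rw [C.mem_RR] at hf hf2 ⊢
    rcases hf with h0 | hf; · exact Or.inl h0
    rcases hf2 with h0 | hf2; · exact Or.inl h0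
    right
    rw [Finsupp.le_def] at hf hf2 ⊢
    intro q
    have e1 := hf q
    have e2 := hf2 q
    simp only [Finsupp.add_apply, Finsupp.sub_apply, Finsupp.coe_zero, Pi.zero_apply] at e1 e2 ⊢
    rcases eq_or_ne q p with rfl | hqp
    · rw [Finsupp.single_eq_same]; omega
    · rw [Finsupp.single_eq_of_ne' (Ne.symm hqp)]; omega
  have e1 := finrank_RR_eq (C := C) (D := D1) (by omega)
  have e2 := finrank_RR_eq (C := C) (D := D1 - Finsupp.single p 1)
    (by rw [deg_sub, deg_single]; omega)
  have e3 := finrank_le_of_RR_le hsub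
  rw [deg_sub, deg_single] at e2
  omega

lemma eq_of_RR_eq {s : ℤ} (hs : 2 * (C.genus : ℤ) ≤ s) {D1 D2 : C.Point →₀ ℤ}
    (h1 : C.deg D1 = s) (h2 : C.deg D2 = s) (hRR : C.RR D1 = C.RR D2) : D1 = D2 :=
  le_antisymm (eq_of_RR_le hs h1 h2 hRR) (eq_of_RR_le hs h2 h1 hRR.symm)

end AbstractCurve
namespace AbstractCurve

open Submodule Module

variable {k : Type} [Field k] {C : AbstractCurve k}

lemma li_mul {m : ℕ} {u : Fin m → C.F} (hu : LinearIndependent k u) (c : C.F) (hc : c ≠ 0) :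
    LinearIndependent k fun i => u i * c := by
  have hinj : LinearMap.ker (LinearMap.mulRight k c) = ⊥ := by
    rw [LinearMap.ker_eq_bot]
    intro x y hxy
    simp only [LinearMap.mulRight_apply] at hxy
    exact mul_left_injective₀ hc hxy
  exact hu.map' (LinearMap.mulRight k c) hinj

lemma span_range_mul {m : ℕ} (u : Fin m → C.F) (c : C.F) :
    span k (Set.range fun i => u i * c)
      = Submodule.map (LinearMap.mulRight k c) (span k (Set.range u)) := by
  rw [Submodule.map_span, ← Set.range_comp]
  rfl

lemma card_li_le_finrank {S : Submodule k C.F} [Module.Finite k S] {m : ℕ} {w : Fin m → C.F}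
    (hw : LinearIndependent k w) (hmem : ∀ i, w i ∈ S) : m ≤ finrank k S := by
  have h2 : LinearIndependent k (fun i => (⟨w i, hmem i⟩ : S)) :=
    LinearIndependent.of_comp S.subtype hw
  simpa using h2.fintype_card_le_finrank

lemma basis_family {S : Submodule k C.F} [Module.Finite k S] {m : ℕ} (h : finrank k S = m) :
    ∃ w : Fin m → C.F, LinearIndependent k w ∧ span k (Set.range w) = S ∧ ∀ i, w i ∈ S := by
  let b := Module.finBasisOfFinrankEq k S h
  refine ⟨fun i => (b i : C.F), ?_, ?_, fun i => (b i).2⟩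
  · exact b.linearIndependent.map' S.subtype S.ker_subtype
  · have : (fun i => ((b i : S) : C.F)) = (S.subtype ∘ b) := rfl
    rw [this, Set.range_comp, Submodule.span_image, b.span_eq, Submodule.map_subtype_top]

lemma family_change {m : ℕ} {w : Fin m → C.F} (hw : LinearIndependent k w)
    {S : Submodule k C.F} [Module.Finite k S] (hspan : span k (Set.range w) = S)
    (Φ : Matrix (Fin m) (Fin m) k) (hΦ : IsUnit Φ.det) :
    LinearIndependent k (fun i => ∑ a, Φ i a • w a) ∧
      span k (Set.range fun i => ∑ a, Φ i a • w a) = S := by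
  classical
  set w' : Fin m → C.F := fun i => ∑ a, Φ i a • w a with hw'
  have hli : LinearIndependent k w' := by
    rw [Fintype.linearIndependent_iff]
    intro c hc
    have hc2 : ∑ a, (Matrix.vecMul c Φ) a • w a = 0 := by
      calc ∑ a, (Matrix.vecMul c Φ) a • w a
          = ∑ a, (∑ i, c i * Φ i a) • w a := by
            simp [Matrix.vecMul, dotProduct]
        _ = ∑ a, ∑ i, (c i * Φ i a) • w a := by
            simp [Finset.sum_smul]
        _ = ∑ i, ∑ a, (c i * Φ i a) • w a := Finset.sum_comm
        _ = ∑ i, c i • w' i := by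
            simp [hw', Finset.smul_sum, smul_smul]
        _ = 0 := hc
    have hall : ∀ a, (Matrix.vecMul c Φ) a = 0 := Fintype.linearIndependent_iff.mp hw _ hc2
    have hc0 : Matrix.vecMul c Φ = 0 := funext hall
    have hcz : c = 0 := by
      have h1 : Matrix.vecMul (Matrix.vecMul c Φ) Φ⁻¹ = Matrix.vecMul c (Φ * Φ⁻¹) :=
        Matrix.vecMul_vecMul c Φ Φ⁻¹
      rw [Matrix.mul_nonsing_inv _ hΦ, Matrix.vecMul_one, hc0, Matrix.zero_vecMul] at h1
      exact h1.symm
    exact fun i => congrFun hcz i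
  refine ⟨hli, ?_⟩
  have hle : span k (Set.range w') ≤ S := by
    rw [← hspan, span_le]
    rintro x ⟨i, rfl⟩
    exact Submodule.sum_mem _ fun a _ => Submodule.smul_mem _ _ (subset_span ⟨a, rfl⟩)
  have hfin : finrank k S = m := by
    rw [← hspan, finrank_span_eq_card hw, Fintype.card_fin]
  exact Submodule.eq_of_le_of_finrank_le hle
    (by rw [hfin, finrank_span_eq_card hli, Fintype.card_fin])

lemma matrix_expand {m : ℕ} (Φ Ψ : Matrix (Fin m) (Fin m) k) (X : Matrix (Fin m) (Fin m) C.F)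
    (u v : Fin m → C.F) (hX : ∀ i j, X i j = u i * v j) (i j : Fin m) :
    (Φ.map (algebraMap k C.F) * X * Ψ.map (algebraMap k C.F)) i j
      = (∑ a, Φ i a • u a) * (∑ b, Ψ b j • v b) := by
  rw [Finset.sum_mul_sum]
  simp only [Matrix.mul_apply, Matrix.map_apply, Finset.sum_mul]
  rw [Finset.sum_comm]
  refine Finset.sum_congr rfl fun a _ => Finset.sum_congr rfl fun b _ => ?_
  rw [hX a b, Algebra.smul_def, Algebra.smul_def]
  ring

lemma exists_transition {m : ℕ} {w w' : Fin m → C.F} {S : Submodule k C.F}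
    [Module.Finite k S]
    (hw : LinearIndependent k w) (hsw : span k (Set.range w) = S)
    (hw' : LinearIndependent k w') (hsw' : span k (Set.range w') = S) :
    ∃ M : Matrix (Fin m) (Fin m) k, IsUnit M.det ∧ ∀ i, w' i = ∑ a, M i a • w a := by
  classical
  have hwS : ∀ i, w i ∈ S := fun i => hsw ▸ subset_span ⟨i, rfl⟩
  have hw'S : ∀ i, w' i ∈ S := fun i => hsw' ▸ subset_span ⟨i, rfl⟩
  set wS : Fin m → S := fun i => ⟨w i, hwS i⟩ with hwSd
  set w'S : Fin m → S := fun i => ⟨w' i, hw'S i⟩ with hw'Sd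
  have hwSli : LinearIndependent k wS := LinearIndependent.of_comp S.subtype hw
  have hw'Sli : LinearIndependent k w'S := LinearIndependent.of_comp S.subtype hw'
  have hfinS : finrank k S = m := by
    rw [← hsw, finrank_span_eq_card hw, Fintype.card_fin]
  have htopw : ⊤ ≤ span k (Set.range wS) :=
    (Submodule.eq_top_of_finrank_eq
      (by rw [finrank_span_eq_card hwSli, Fintype.card_fin, hfinS])).ge
  have htopw' : ⊤ ≤ span k (Set.range w'S) :=
    (Submodule.eq_top_of_finrank_eq
      (by rw [finrank_span_eq_card hw'Sli, Fintype.card_fin, hfinS])).ge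
  let bw : Basis (Fin m) k S := Basis.mk hwSli htopw
  let bw' : Basis (Fin m) k S := Basis.mk hw'Sli htopw'
  have hMdet : IsUnit (bw.toMatrix w'S).det := by
    haveI := Basis.invertibleToMatrix bw bw'
    have h0 : IsUnit (bw.toMatrix ⇑bw').det := Matrix.isUnit_det_of_invertible _
    have he : ⇑bw' = w'S := Basis.coe_mk hw'Sli htopw'
    rwa [he] at h0
  refine ⟨(bw.toMatrix w'S).transpose, ?_, fun i => ?_⟩
  · rw [Matrix.det_transpose]; exact hMdet
  have hsum := bw.sum_toMatrix_smul_self w'S i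
  have hbw : ∀ a, ((bw a : S) : C.F) = w a := fun a => by
    rw [show ⇑bw = wS from Basis.coe_mk hwSli htopw]
  calc w' i = ((w'S i : S) : C.F) := rfl
    _ = ((∑ a, bw.toMatrix w'S a i • bw a : S) : C.F) := by rw [hsum]
    _ = ∑ a, (bw.toMatrix w'S).transpose i a • w a := by
        rw [Submodule.coe_sum]
        refine Finset.sum_congr rfl fun a _ => ?_
        rw [SetLike.val_smul, Matrix.transpose_apply, hbw a]

end AbstractCurve
namespace AbstractCurve

open Submodule Module

variable {k : Type} [Field k] {C : AbstractCurve k}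

lemma linEquiv_refl (D : C.Point →₀ ℤ) : C.LinEquiv D D :=
  ⟨1, one_ne_zero, by rw [divOf_one, add_zero]⟩

lemma linEquiv_symm {D D' : C.Point →₀ ℤ} (h : C.LinEquiv D D') : C.LinEquiv D' D := by
  obtain ⟨f, hf, rfl⟩ := h
  exact ⟨f⁻¹, inv_ne_zero hf, by rw [divOf_inv f hf]; abel⟩

lemma linEquiv_trans {D D' D'' : C.Point →₀ ℤ} (h : C.LinEquiv D D') (h' : C.LinEquiv D' D'') :
    C.LinEquiv D D'' := by
  obtain ⟨f, hf, rfl⟩ := h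
  obtain ⟨g, hg, rfl⟩ := h'
  exact ⟨f * g, mul_ne_zero hf hg, by rw [C.divOf_mul f g hf hg]; abel⟩

lemma kEquiv_refl {m : ℕ} (X : Matrix (Fin m) (Fin m) C.F) : KEquivalent k X X := by
  refine ⟨1, 1, by simp, by simp, ?_⟩
  rw [Matrix.map_one _ (map_zero _) (map_one _), one_mul, mul_one]


lemma kEquiv_symm {m : ℕ} {X Y : Matrix (Fin m) (Fin m) C.F}
    (h : KEquivalent k X Y) : KEquivalent k Y X := by
  obtain ⟨Φ, Ψ, hΦ, hΨ, rfl⟩ := h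
  refine ⟨Φ⁻¹, Ψ⁻¹, Matrix.isUnit_nonsing_inv_det Φ hΦ, Matrix.isUnit_nonsing_inv_det Ψ hΨ, ?_⟩
  have h1 : Φ⁻¹.map (algebraMap k C.F) * Φ.map (algebraMap k C.F) = 1 := by
    rw [← Matrix.map_mul, Matrix.nonsing_inv_mul _ hΦ, Matrix.map_one _ (map_zero _) (map_one _)]
  have h2 : Ψ.map (algebraMap k C.F) * Ψ⁻¹.map (algebraMap k C.F) = 1 := by
    rw [← Matrix.map_mul, Matrix.mul_nonsing_inv _ hΨ, Matrix.map_one _ (map_zero _) (map_one _)]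
  have h3 : Φ⁻¹.map (algebraMap k C.F) * (Φ.map (algebraMap k C.F) * X * Ψ.map (algebraMap k C.F))
        * Ψ⁻¹.map (algebraMap k C.F)
      = (Φ⁻¹.map (algebraMap k C.F) * Φ.map (algebraMap k C.F)) * X
        * (Ψ.map (algebraMap k C.F) * Ψ⁻¹.map (algebraMap k C.F)) := by
    simp only [mul_assoc]
  rw [h3, h1, h2, one_mul, mul_one]

lemma kEquiv_trans {m : ℕ} {X Y Z : Matrix (Fin m) (Fin m) C.F}
    (h : KEquivalent k X Y) (h' : KEquivalent k Y Z) : KEquivalent k X Z := by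
  obtain ⟨Φ, Ψ, hΦ, hΨ, rfl⟩ := h
  obtain ⟨Φ', Ψ', hΦ', hΨ', rfl⟩ := h'
  refine ⟨Φ' * Φ, Ψ * Ψ', by rw [Matrix.det_mul]; exact hΦ'.mul hΦ,
    by rw [Matrix.det_mul]; exact hΨ.mul hΨ', ?_⟩
  rw [Matrix.map_mul, Matrix.map_mul]
  simp only [mul_assoc]

end AbstractCurve
namespace AbstractCurve

open Submodule Module

variable {k : Type} [Field k] {C : AbstractCurve k}
variable {G : C.Point →₀ ℤ} {s : ℤ} {n : ℕ}

lemma exists_represents (hG : C.deg G = 2 * s) (hs : 2 * (C.genus : ℤ) ≤ s)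
    (hn : (n : ℤ) = s - C.genus + 1)
    {X : Matrix (Fin n) (Fin n) C.F} (hX : C.IsGForm G X) :
    ∃ D, C.deg D = s ∧ C.Represents G D X := by
  classical
  obtain ⟨hmem, hminor, ⟨i0, hrow⟩, ⟨j0, hcol⟩⟩ := hX
  haveI : Nonempty (Fin n) := ⟨i0⟩
  have hc : X i0 j0 ≠ 0 := hrow.ne_zero j0
  set c : C.F := X i0 j0 with hcd
  set u : Fin n → C.F := fun i => X i j0 * c⁻¹ with hud
  set v : Fin n → C.F := fun j => X i0 j with hvd
  have huv : ∀ i j, X i j = u i * v j := by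
    intro i j
    have hm : X i j0 * X i0 j = X i j * X i0 j0 := hminor i i0 j0 j
    have : u i * v j = X i j * c * c⁻¹ := by rw [hud, hvd]; dsimp only; rw [← hm, hcd]; ring
    rw [this, mul_assoc, mul_inv_cancel₀ hc, mul_one]
  have hvne : ∀ j, v j ≠ 0 := fun j => hrow.ne_zero j
  have hune : ∀ i, u i ≠ 0 := fun i => mul_ne_zero (hcol.ne_zero i) (inv_ne_zero hc)
  have hXne : ∀ i j, X i j ≠ 0 := fun i j => by
    rw [huv i j]; exact mul_ne_zero (hune i) (hvne j)
  have hu_li : LinearIndependent k u := li_mul hcol c⁻¹ (inv_ne_zero hc)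
  have hv_li : LinearIndependent k v := hrow
  set D : C.Point →₀ ℤ :=
    Finset.univ.sup' Finset.univ_nonempty (fun i => -C.divOf (u i)) with hDd
  have hu_mem : ∀ i, u i ∈ C.RR D := by
    intro i
    rw [C.mem_RR]
    right
    have h1 : -C.divOf (u i) ≤ D := by
      rw [hDd]
      exact Finset.le_sup' (fun i => -C.divOf (u i)) (Finset.mem_univ i)
    rw [Finsupp.le_def] at h1
    rw [Finsupp.le_def]
    intro p
    have := h1 p
    simp only [Finsupp.neg_apply, Finsupp.add_apply, Finsupp.coe_zero, Pi.zero_apply] at this ⊢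
    omega
  have hv_mem : ∀ j, v j ∈ C.RR (G - D) := by
    intro j
    rw [C.mem_RR]
    right
    have h1 : D ≤ C.divOf (v j) + G := by
      apply Finset.sup'_le
      intro i _
      rcases (C.mem_RR G (X i j)).mp (hmem i j) with h0 | hX1
      · exact absurd h0 (hXne i j)
      rw [huv i j, C.divOf_mul _ _ (hune i) (hvne j)] at hX1
      rw [Finsupp.le_def] at hX1 ⊢
      intro p
      have := hX1 p
      simp only [Finsupp.neg_apply, Finsupp.add_apply, Finsupp.coe_zero, Pi.zero_apply] at this ⊢
      omega
    rw [Finsupp.le_def] at h1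
    rw [Finsupp.le_def]
    intro p
    have := h1 p
    simp only [Finsupp.add_apply, Finsupp.sub_apply, Finsupp.coe_zero, Pi.zero_apply] at this ⊢
    omega
  haveI := C.finite_RR D
  haveI := C.finite_RR (G - D)
  have hnD : n ≤ finrank k (C.RR D) := card_li_le_finrank hu_li hu_mem
  have hnGD : n ≤ finrank k (C.RR (G - D)) := card_li_le_finrank hv_li hv_mem
  have hgn : (C.genus : ℤ) + 1 ≤ (n : ℤ) := by omega
  have hD1 : 2 * (C.genus : ℤ) - 2 < C.deg D := by
    apply deg_lt_of_genus_lt_finrank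
    have : ((n : ℕ) : ℤ) ≤ (finrank k (C.RR D) : ℤ) := by exact_mod_cast hnD
    omega
  have hD2 : 2 * (C.genus : ℤ) - 2 < C.deg (G - D) := by
    apply deg_lt_of_genus_lt_finrank
    have : ((n : ℕ) : ℤ) ≤ (finrank k (C.RR (G - D)) : ℤ) := by exact_mod_cast hnGD
    omega
  have e1 := finrank_RR_eq (C := C) hD1
  have e2 := finrank_RR_eq (C := C) hD2
  have hdegGD : C.deg (G - D) = 2 * s - C.deg D := by rw [deg_sub, hG]
  have hnD' : ((n : ℕ) : ℤ) ≤ (finrank k (C.RR D) : ℤ) := by exact_mod_cast hnD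
  have hnGD' : ((n : ℕ) : ℤ) ≤ (finrank k (C.RR (G - D)) : ℤ) := by exact_mod_cast hnGD
  have hdegD : C.deg D = s := by omega
  have hfD : finrank k (C.RR D) = n := by omega
  have hfGD : finrank k (C.RR (G - D)) = n := by omega
  have hspanU : span k (Set.range u) = C.RR D := by
    apply Submodule.eq_of_le_of_finrank_le
    · rw [span_le]; rintro x ⟨i, rfl⟩; exact hu_mem i
    · rw [finrank_span_eq_card hu_li, Fintype.card_fin, hfD]
  have hspanV : span k (Set.range v) = C.RR (G - D) := by
    apply Submodule.eq_of_le_of_finrank_le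
    · rw [span_le]; rintro x ⟨j, rfl⟩; exact hv_mem j
    · rw [finrank_span_eq_card hv_li, Fintype.card_fin, hfGD]
  exact ⟨D, hdegD, u, v, hu_li, hspanU, hv_li, hspanV, huv⟩

end AbstractCurve
namespace AbstractCurve

open Submodule Module

variable {k : Type} [Field k] {C : AbstractCurve k}
variable {G : C.Point →₀ ℤ} {s : ℤ} {n : ℕ}

lemma exists_gform_represents (hG : C.deg G = 2 * s) (hs : 2 * (C.genus : ℤ) ≤ s)
    (hn : (n : ℤ) = s - C.genus + 1)
    {D : C.Point →₀ ℤ} (hD : C.deg D = s) :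
    ∃ X : Matrix (Fin n) (Fin n) C.F, C.IsGForm G X ∧ C.Represents G D X := by
  classical
  have hn1 : 0 < n := by omega
  haveI : Nonempty (Fin n) := Fin.pos_iff_nonempty.mp hn1
  haveI := C.finite_RR D
  haveI := C.finite_RR (G - D)
  have hdD : 2 * (C.genus : ℤ) - 2 < C.deg D := by omega
  have hdGD : C.deg (G - D) = s := by rw [deg_sub, hG, hD]; ring
  have e1 := finrank_RR_eq (C := C) hdD
  have e2 := finrank_RR_eq (C := C) (D := G - D) (by omega)
  have hfD : finrank k (C.RR D) = n := by omega
  have hfGD : finrank k (C.RR (G - D)) = n := by omega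
  obtain ⟨u, hu_li, hu_span, hu_mem⟩ := basis_family hfD
  obtain ⟨v, hv_li, hv_span, hv_mem⟩ := basis_family hfGD
  have hGsplit : D + (G - D) = G := by abel
  refine ⟨Matrix.of (fun i j => u i * v j), ⟨?_, ?_, ?_⟩,
    u, v, hu_li, hu_span, hv_li, hv_span, fun i j => rfl⟩
  · intro i j
    have := mul_mem_RR (hu_mem i) (hv_mem j)
    rwa [hGsplit] at this
  · intro i i' j j'
    show (u i * v j) * (u i' * v j') = (u i * v j') * (u i' * v j)
    ring
  · constructor
    · refine ⟨Classical.arbitrary (Fin n), ?_⟩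
      have hne : u (Classical.arbitrary (Fin n)) ≠ 0 := hu_li.ne_zero _
      have h1 : LinearIndependent k fun j => v j * u (Classical.arbitrary (Fin n)) :=
        li_mul hv_li _ hne
      have h2 : (fun j => v j * u (Classical.arbitrary (Fin n)))
          = fun j => u (Classical.arbitrary (Fin n)) * v j := by
        funext j; ring
      rw [h2] at h1
      exact h1
    · refine ⟨Classical.arbitrary (Fin n), ?_⟩
      have hne : v (Classical.arbitrary (Fin n)) ≠ 0 := hv_li.ne_zero _
      exact li_mul hu_li _ hne

lemma represents_linEquiv {D D' : C.Point →₀ ℤ} {X : Matrix (Fin n) (Fin n) C.F}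
    (hR : C.Represents G D X) (h : C.LinEquiv D D') : C.Represents G D' X := by
  obtain ⟨u, v, hu, hsu, hv, hsv, he⟩ := hR
  obtain ⟨f, hf, rfl⟩ := h
  refine ⟨fun i => u i * f⁻¹, fun j => v j * f, li_mul hu _ (inv_ne_zero hf), ?_,
    li_mul hv _ hf, ?_, ?_⟩
  · rw [span_range_mul, hsu, map_mulRight_RR _ (inv_ne_zero hf), divOf_inv f hf, sub_neg_eq_add]
  · rw [span_range_mul, hsv, map_mulRight_RR _ hf, sub_add_eq_sub_sub]
  · intro i j
    rw [he i j]
    field_simp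
end AbstractCurve
namespace AbstractCurve

open Submodule Module

variable {k : Type} [Field k] {C : AbstractCurve k}
variable {G : C.Point →₀ ℤ} {s : ℤ} {n : ℕ}

lemma linEquiv_of_represents (hs : 2 * (C.genus : ℤ) ≤ s) (hn : (n : ℤ) = s - C.genus + 1)
    {D D' : C.Point →₀ ℤ} {X : Matrix (Fin n) (Fin n) C.F}
    (h1 : C.deg D = s) (h2 : C.deg D' = s)
    (hR : C.Represents G D X) (hR' : C.Represents G D' X) : C.LinEquiv D D' := by
  classical
  obtain ⟨u, v, hu, hsu, hv, hsv, he⟩ := hR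
  obtain ⟨u', v', hu', hsu', hv', hsv', he'⟩ := hR'
  have hn1 : 0 < n := by omega
  haveI : Nonempty (Fin n) := Fin.pos_iff_nonempty.mp hn1
  set j1 : Fin n := Classical.arbitrary (Fin n)
  have hv'ne : v' j1 ≠ 0 := hv'.ne_zero j1
  have hvne : v j1 ≠ 0 := hv.ne_zero j1
  set h : C.F := v j1 * (v' j1)⁻¹ with hh
  have hhne : h ≠ 0 := mul_ne_zero hvne (inv_ne_zero hv'ne)
  have hu'eq : ∀ i, u' i = u i * h := by
    intro i
    have e1 : u i * v j1 = u' i * v' j1 := by rw [← he, ← he']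
    calc u' i = u' i * v' j1 * (v' j1)⁻¹ := by field_simp
      _ = u i * v j1 * (v' j1)⁻¹ := by rw [← e1]
      _ = u i * h := by rw [hh]; ring
  have hspan : C.RR D' = C.RR (D - C.divOf h) := by
    calc C.RR D' = span k (Set.range u') := hsu'.symm
      _ = span k (Set.range fun i => u i * h) := by
          rw [show u' = fun i => u i * h from funext hu'eq]
      _ = Submodule.map (LinearMap.mulRight k h) (span k (Set.range u)) := span_range_mul u h
      _ = Submodule.map (LinearMap.mulRight k h) (C.RR D) := by rw [hsu]
      _ = C.RR (D - C.divOf h) := map_mulRight_RR h hhne D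
  have hdeg : C.deg (D - C.divOf h) = s := by
    rw [deg_sub, deg_divOf' h hhne, h1]; ring
  have hDD : D' = D - C.divOf h := eq_of_RR_eq hs h2 hdeg hspan
  refine ⟨h⁻¹, inv_ne_zero hhne, ?_⟩
  rw [hDD, divOf_inv h hhne, sub_eq_add_neg]

lemma represents_kEquiv {D : C.Point →₀ ℤ} {X Y : Matrix (Fin n) (Fin n) C.F}
    (hR : C.Represents G D X) (hE : KEquivalent k X Y) : C.Represents G D Y := by
  classical
  obtain ⟨u, v, hu, hsu, hv, hsv, he⟩ := hR
  obtain ⟨Φ, Ψ, hΦ, hΨ, rfl⟩ := hE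
  haveI := C.finite_RR D
  haveI := C.finite_RR (G - D)
  obtain ⟨hu', hsu'⟩ := family_change hu hsu Φ hΦ
  obtain ⟨hv', hsv'⟩ := family_change hv hsv Ψ.transpose
    (by rw [Matrix.det_transpose]; exact hΨ)
  refine ⟨fun i => ∑ a, Φ i a • u a, fun j => ∑ b, Ψ.transpose j b • v b,
    hu', hsu', hv', hsv', ?_⟩
  intro i j
  rw [matrix_expand Φ Ψ X u v he i j]
  refine congrArg _ ?_
  refine Finset.sum_congr rfl fun b _ => ?_
  rw [Matrix.transpose_apply]

lemma kEquiv_of_represents {D : C.Point →₀ ℤ} {X Y : Matrix (Fin n) (Fin n) C.F}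
    (hX : C.Represents G D X) (hY : C.Represents G D Y) : KEquivalent k X Y := by
  classical
  obtain ⟨u, v, hu, hsu, hv, hsv, he⟩ := hX
  obtain ⟨u', v', hu', hsu', hv', hsv', he'⟩ := hY
  haveI := C.finite_RR D
  haveI := C.finite_RR (G - D)
  obtain ⟨M, hM, hMw⟩ := exists_transition hu hsu hu' hsu'
  obtain ⟨N, hN, hNw⟩ := exists_transition hv hsv hv' hsv'
  refine ⟨M, N.transpose, hM, by rw [Matrix.det_transpose]; exact hN, ?_⟩
  funext i j
  rw [matrix_expand M N.transpose X u v he i j, he' i j, hMw i, hNw j]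
  refine congrArg _ ?_
  refine Finset.sum_congr rfl fun b _ => ?_
  rw [Matrix.transpose_apply]

end AbstractCurve

open AbstractCurve in
/-- Let `G` be a divisor with `deg G = 2s` even and `s ≥ 2g`.  There
is a unique bijective correspondence between the set of `k`-equivalence classes of
`G`-forms and the set of divisor classes of degree `s = ½ deg G`, with respect to
which the class of a `G`-form `X` corresponds to the class of a divisor `D` if and
only if `X` represents `D`. -/
theorem gform_divisor_correspondence (k : Type) [Field k] [IsAlgClosed k]
    (C : AbstractCurve k) (G : C.Point →₀ ℤ) (s : ℤ)
    (hG : C.deg G = 2 * s) (hs : 2 * (C.genus : ℤ) ≤ s)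
    (n : ℕ) (hn : (n : ℤ) = s - C.genus + 1) :
    ∃! φ : Quot (C.GFormEquiv G n) → Quot (C.DivClassEquiv s),
      Function.Bijective φ ∧
        ∀ (X : {X : Matrix (Fin n) (Fin n) C.F // C.IsGForm G X})
          (D : {D : C.Point →₀ ℤ // C.deg D = s}),
          φ (Quot.mk (C.GFormEquiv G n) X) = Quot.mk (C.DivClassEquiv s) D ↔
            C.Represents G D.1 X.1 := by
  classical
  -- the relations are equivalence relations
  have equiv2 : Equivalence (C.DivClassEquiv s) :=
    ⟨fun D => linEquiv_refl D.1, fun h => linEquiv_symm h, fun h h' => linEquiv_trans h h'⟩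
  -- choose a represented divisor for every G-form
  have exrep : ∀ X : {X : Matrix (Fin n) (Fin n) C.F // C.IsGForm G X},
      ∃ D : {D : C.Point →₀ ℤ // C.deg D = s}, C.Represents G D.1 X.1 := by
    intro X
    obtain ⟨D, hD, hR⟩ := exists_represents hG hs hn X.2
    exact ⟨⟨D, hD⟩, hR⟩
  choose pick hpick using exrep
  -- the induced map on quotients
  have hwd : ∀ X Y, C.GFormEquiv G n X Y →
      Quot.mk (C.DivClassEquiv s) (pick X) = Quot.mk (C.DivClassEquiv s) (pick Y) := by
    intro X Y hXY
    apply Quot.sound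
    have hYX : C.Represents G (pick X).1 Y.1 := represents_kEquiv (hpick X) hXY
    exact linEquiv_of_represents hs hn (pick X).2 (pick Y).2 hYX (hpick Y)
  refine ⟨Quot.lift (fun X => Quot.mk (C.DivClassEquiv s) (pick X)) hwd, ⟨⟨?_, ?_⟩, ?_⟩, ?_⟩
  · -- injective
    intro q1 q2 hq
    induction q1 using Quot.ind with | _ X => ?_
    induction q2 using Quot.ind with | _ Y => ?_
    have h1 : Quot.mk (C.DivClassEquiv s) (pick X) = Quot.mk (C.DivClassEquiv s) (pick Y) := hq
    have h2 : C.LinEquiv (pick X).1 (pick Y).1 :=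
      equiv2.eqvGen_iff.mp (Quot.eq.mp h1)
    have h3 : C.Represents G (pick X).1 Y.1 :=
      represents_linEquiv (hpick Y) (linEquiv_symm h2)
    exact Quot.sound (kEquiv_of_represents (hpick X) h3)
  · -- surjective
    intro q
    induction q using Quot.ind with | _ D => ?_
    obtain ⟨X, hXG, hXR⟩ := exists_gform_represents hG hs hn D.2
    refine ⟨Quot.mk (C.GFormEquiv G n) ⟨X, hXG⟩, ?_⟩
    exact Quot.sound (linEquiv_of_represents hs hn (pick ⟨X, hXG⟩).2 D.2 (hpick ⟨X, hXG⟩) hXR)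
  · -- the characterizing property
    intro X D
    constructor
    · intro hφ
      have h2 : C.LinEquiv (pick X).1 D.1 := equiv2.eqvGen_iff.mp (Quot.eq.mp hφ)
      exact represents_linEquiv (hpick X) h2
    · intro hRep
      exact Quot.sound (linEquiv_of_represents hs hn (pick X).2 D.2 (hpick X) hRep)
  · -- uniqueness
    intro ψ ⟨hbij, hiff⟩
    funext q
    induction q using Quot.ind with | _ X => ?_
    have h1 : ψ (Quot.mk (C.GFormEquiv G n) X) = Quot.mk (C.DivClassEquiv s) (pick X) :=
      (hiff X (pick X)).mpr (hpick X)
    exact h1
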